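/- Injectivity of persistence spheres with a positive weighting: if ω : R^2 → (0,1] is strictly positive and φ^ω_{μ_D} = φ^ω_{μ_{D'}} as functions on S^2, then μ_D = μ_{D'}. That is, Σ_{p∈D} ω(p) a_p ReLU(⟨v,(1,p)⟩) = Σ_{q∈D'} ω(q) b_q ReLU(⟨v,(1,q)⟩) for all unit v ∈ R^3 implies the two weighted point sets coincide. -/

import Mathlib

open Pointwise MeasureTheory Filter

/-- Support function of a set in a real inner ℝ product space. -/
noncomputable def suppFn {E : Type*} [NormedAddCommGroup E] [InnerProductSpace ℝ E]
    (A : Set E) (x : E) : ℝ :=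
  sSup ((fun a => (inner ℝ x a : ℝ)) '' A)

/-- The lift of a planar point `p = (x, y)` to `(1, x, y) ∈ ℝ³` (Euclidean). -/
noncomputable def lift3 (p : ℝ × ℝ) : EuclideanSpace ℝ (Fin 3) := WithLp.toLp 2 ![1, p.1, p.2]

/-- Lift zonoid of a weighted finite set of planar points: the Minkowski sum of the
segments `w p • [0, (1,p)]`. -/
noncomputable def liftZonoid (D : Finset (ℝ × ℝ)) (w : ℝ × ℝ → ℝ) :
    Set (EuclideanSpace ℝ (Fin 3)) :=
  ∑ p ∈ D, w p • segment ℝ (0 : EuclideanSpace ℝ (Fin 3)) (lift3 p)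

/-- Persistence sphere (support function of the lift zonoid, explicit formula). -/
noncomputable def persSphere (D : Finset (ℝ × ℝ)) (w : ℝ × ℝ → ℝ)
    (v : EuclideanSpace ℝ (Fin 3)) : ℝ :=
  ∑ p ∈ D, w p * max 0 (inner ℝ v (lift3 p) : ℝ)

/-- Cost of a partial matching `γ` (defined on `S ⊆ D`, with image in `D'`) between the
diagrams `(D, a)` and `(D', b)`.  Note that the norm on `ℝ × ℝ` is the sup-norm, and the
distance of `p = (x,y)` to the diagonal is `(y - x)/2`. -/
noncomputable def matchCost (D D' : Finset (ℝ × ℝ)) (a b : ℝ × ℝ → ℕ)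
    (S : Finset (ℝ × ℝ)) (γ : ℝ × ℝ → ℝ × ℝ) : ℝ :=
  (∑ p ∈ S, (min (a p) (b (γ p)) : ℝ) * ‖p - γ p‖)
  + (∑ p ∈ S, ((a p : ℝ) - (min (a p) (b (γ p)) : ℝ)) * ((p.2 - p.1) / 2))
  + (∑ p ∈ S, ((b (γ p) : ℝ) - (min (a p) (b (γ p)) : ℝ)) * (((γ p).2 - (γ p).1) / 2))
  + (∑ p ∈ D \ S, (a p : ℝ) * ((p.2 - p.1) / 2))
  + (∑ q ∈ D' \ S.image γ, (b q : ℝ) * ((q.2 - q.1) / 2))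

/-- The 1-Wasserstein distance between persistence diagrams: infimum of matching costs
over all partial matchings. -/
noncomputable def W1 (D D' : Finset (ℝ × ℝ)) (a b : ℝ × ℝ → ℕ) : ℝ :=
  sInf { c : ℝ | ∃ (S : Finset (ℝ × ℝ)) (γ : ℝ × ℝ → ℝ × ℝ),
    S ⊆ D ∧ S.image γ ⊆ D' ∧ Set.InjOn γ ↑S ∧ c = matchCost D D' a b S γ }

noncomputable def vec3 (A B C : ℝ) : EuclideanSpace ℝ (Fin 3) := WithLp.toLp 2 ![A, B, C]

lemma inner_lift3 (A B C : ℝ) (p : ℝ × ℝ) :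
    (inner ℝ (vec3 A B C) (lift3 p) : ℝ) = A + B*p.1 + C*p.2 := by
  simp [lift3, vec3, PiLp.inner_apply, Fin.sum_univ_three, RCLike.inner_apply]
  ring

lemma max_zero_add_max_zero_neg (x : ℝ) : max 0 x + max 0 (-x) = |x| := by
  rcases le_total 0 x with h | h
  · rw [max_eq_right h, max_eq_left (neg_nonpos.mpr h), add_zero, abs_of_nonneg h]
  · rw [max_eq_left h, max_eq_right (neg_nonneg.mpr h), zero_add, abs_of_nonpos h]

lemma persSphere_smul (D : Finset (ℝ × ℝ)) (w : ℝ × ℝ → ℝ) (c : ℝ) (hc : 0 ≤ c)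
    (v : EuclideanSpace ℝ (Fin 3)) :
    persSphere D w (c • v) = c * persSphere D w v := by
  unfold persSphere
  rw [Finset.mul_sum]
  refine Finset.sum_congr rfl fun p _ => ?_
  rw [real_inner_smul_left]
  rcases le_total 0 (inner ℝ v (lift3 p) : ℝ) with hr | hr
  · rw [max_eq_right hr, max_eq_right (mul_nonneg hc hr)]; ring
  · rw [max_eq_left hr, max_eq_left (by nlinarith : c * (inner ℝ v (lift3 p) : ℝ) ≤ 0)]; ring

/-- Key analytic lemma: if `∑ F p |⟨v, lift3 p⟩| = 0` for all `v`, every coefficient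
vanishes. -/
lemma coeff_vanish (E : Finset (ℝ × ℝ)) (F : ℝ × ℝ → ℝ)
    (habs : ∀ v : EuclideanSpace ℝ (Fin 3), ∑ p ∈ E, F p * |(inner ℝ v (lift3 p) : ℝ)| = 0)
    (p0 : ℝ × ℝ) (hp0 : p0 ∈ E) : F p0 = 0 := by
  obtain ⟨s, hs⟩ := Infinite.exists_notMem_finset
    ((E.erase p0).image fun p => -(p.2 - p0.2) / (p.1 - p0.1))
  set v : EuclideanSpace ℝ (Fin 3) := vec3 (-(p0.1*s + p0.2)) s 1 with hvdef
  set u0 : EuclideanSpace ℝ (Fin 3) := lift3 p0 with hudef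
  set c : ℝ × ℝ → ℝ := fun p => inner ℝ v (lift3 p) with hcdef
  set d : ℝ × ℝ → ℝ := fun p => inner ℝ u0 (lift3 p) with hddef
  have hc : ∀ p, c p = (p.1 - p0.1)*s + (p.2 - p0.2) := by
    intro p
    have : c p = -(p0.1*s + p0.2) + s*p.1 + 1*p.2 := inner_lift3 _ _ _ p
    rw [this]; ring
  have hc0 : c p0 = 0 := by rw [hc]; ring
  have hd0' : d p0 = 1 + p0.1*p0.1 + p0.2*p0.2 := inner_lift3 1 p0.1 p0.2 p0
  have hd0 : 0 < d p0 := by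
    rw [hd0']; nlinarith [mul_self_nonneg p0.1, mul_self_nonneg p0.2]
  have hcne : ∀ p ∈ E.erase p0, c p ≠ 0 := by
    intro p hp hceq
    rw [hc] at hceq
    obtain ⟨hne, hpE⟩ := Finset.mem_erase.mp hp
    by_cases hx : p.1 = p0.1
    · have : p.2 = p0.2 := by rw [hx] at hceq; linarith
      exact hne (Prod.ext hx this)
    · apply hs
      refine Finset.mem_image.mpr ⟨p, hp, ?_⟩
      rw [div_eq_iff (sub_ne_zero.mpr hx)]
      linarith
  set T : Finset ℝ := insert 1 ((E.erase p0).image fun p => |c p| / (|d p| + 1)) with hTdef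
  have hTne : T.Nonempty := ⟨1, Finset.mem_insert_self _ _⟩
  set t := T.min' hTne with htdef
  have ht_pos : 0 < t := by
    rw [htdef, Finset.lt_min'_iff]
    intro y hy
    rcases Finset.mem_insert.mp hy with h1 | h1
    · rw [h1]; norm_num
    · obtain ⟨p, hp, rfl⟩ := Finset.mem_image.mp h1
      exact div_pos (abs_pos.mpr (hcne p hp)) (by positivity)
  have ht_le : ∀ p ∈ E.erase p0, |t * d p| ≤ |c p| := by
    intro p hp
    have h1 : t ≤ |c p| / (|d p| + 1) :=
      Finset.min'_le _ _ (Finset.mem_insert_of_mem (Finset.mem_image_of_mem _ hp))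
    rw [abs_mul, abs_of_pos ht_pos]
    calc t * |d p| ≤ (|c p| / (|d p| + 1)) * (|d p| + 1) := by
          apply mul_le_mul h1 (by linarith) (abs_nonneg _) (by positivity)
      _ = |c p| := div_mul_cancel₀ _ (by positivity)
  have hinner : ∀ (τ : ℝ) (p : ℝ × ℝ),
      (inner ℝ (v + τ • u0) (lift3 p) : ℝ) = c p + τ * d p := by
    intro τ p
    rw [inner_add_left, real_inner_smul_left]
  have A1 : ∑ p ∈ E, F p * |c p + t * d p| = 0 := by
    have := habs (v + t • u0); simp only [hinner] at this; exact this
  have A2 : ∑ p ∈ E, F p * |c p - t * d p| = 0 := by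
    have := habs (v + (-t) • u0)
    simp only [hinner, neg_mul, ← sub_eq_add_neg] at this; exact this
  have A3 : ∑ p ∈ E, F p * |c p| = 0 := habs v
  have A3' : ∑ p ∈ E, F p * (2 * |c p|) = 0 := by
    have e : (∑ p ∈ E, F p * (2 * |c p|)) = 2 * ∑ p ∈ E, F p * |c p| := by
      rw [Finset.mul_sum]; exact Finset.sum_congr rfl fun p _ => by ring
    rw [e, A3, mul_zero]
  have key : ∑ p ∈ E, F p * (|c p + t * d p| + |c p - t * d p| - 2 * |c p|) = 0 := by
    have e : (∑ p ∈ E, F p * (|c p + t * d p| + |c p - t * d p| - 2 * |c p|))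
        = (∑ p ∈ E, F p * |c p + t * d p|) + (∑ p ∈ E, F p * |c p - t * d p|)
          - (∑ p ∈ E, F p * (2 * |c p|)) := by
      rw [← Finset.sum_add_distrib, ← Finset.sum_sub_distrib]
      exact Finset.sum_congr rfl fun p _ => by ring
    rw [e, A1, A2, A3']; ring
  have single : ∑ p ∈ E, F p * (|c p + t * d p| + |c p - t * d p| - 2 * |c p|)
      = F p0 * (|c p0 + t * d p0| + |c p0 - t * d p0| - 2 * |c p0|) := by
    apply Finset.sum_eq_single_of_mem p0 hp0
    intro p hp hne
    have hb := abs_le.mp (ht_le p (Finset.mem_erase.mpr ⟨hne, hp⟩))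
    have e : |c p + t * d p| + |c p - t * d p| = 2 * |c p| := by
      rcases le_total 0 (c p) with hcp | hcp
      · rw [abs_of_nonneg hcp] at hb
        rw [abs_of_nonneg (by linarith), abs_of_nonneg (by linarith), abs_of_nonneg hcp]
        ring
      · rw [abs_of_nonpos hcp] at hb
        rw [abs_of_nonpos (by linarith), abs_of_nonpos (by linarith), abs_of_nonpos hcp]
        ring
    rw [e, sub_self, mul_zero]
  rw [single] at key
  have e2 : |c p0 + t * d p0| + |c p0 - t * d p0| - 2 * |c p0| = 2 * (t * d p0) := by
    rw [hc0, zero_add, zero_sub, abs_neg, abs_zero, abs_of_pos (mul_pos ht_pos hd0)]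
    ring
  rw [e2] at key
  rcases mul_eq_zero.mp key with h | h
  · exact h
  · exfalso; nlinarith [mul_pos ht_pos hd0]

/-- injectivity of persistence spheres for a strictly positive weighting:
if the persistence spheres agree on the unit sphere, the weighted diagrams coincide. -/
theorem persSphere_injective
    (ω : ℝ × ℝ → ℝ) (hω : ∀ p, ω p ∈ Set.Ioc (0 : ℝ) 1)
    (D D' : Finset (ℝ × ℝ)) (a b : ℝ × ℝ → ℕ)
    (hD : ∀ p ∈ D, p.1 < p.2) (hD' : ∀ q ∈ D', q.1 < q.2)
    (ha : ∀ p ∈ D, 0 < a p) (hb : ∀ q ∈ D', 0 < b q)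
    (h : ∀ v : EuclideanSpace ℝ (Fin 3), ‖v‖ = 1 →
      persSphere D (fun p => ω p * (a p : ℝ)) v = persSphere D' (fun q => ω q * (b q : ℝ)) v) :
    D = D' ∧ ∀ p ∈ D, a p = b p := by
  have hωpos : ∀ p, 0 < ω p := fun p => (hω p).1
  set F : ℝ × ℝ → ℝ := fun p =>
    (if p ∈ D then ω p * (a p : ℝ) else 0) - (if p ∈ D' then ω p * (b p : ℝ) else 0) with hFdef
  -- extend the hypothesis to all of ℝ³ by homogeneity
  have hall : ∀ v : EuclideanSpace ℝ (Fin 3),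
      persSphere D (fun p => ω p * (a p : ℝ)) v = persSphere D' (fun q => ω q * (b q : ℝ)) v := by
    intro v
    by_cases hv : v = 0
    · subst hv; simp [persSphere, inner_zero_left]
    · have hn : ‖v‖ ≠ 0 := norm_ne_zero_iff.mpr hv
      have hu : ‖(‖v‖⁻¹ • v : EuclideanSpace ℝ (Fin 3))‖ = 1 := by
        rw [norm_smul, norm_inv, norm_norm, inv_mul_cancel₀ hn]
      have h1 := h _ hu
      have h2 : persSphere D (fun p => ω p * (a p : ℝ)) (‖v‖ • (‖v‖⁻¹ • v))
          = persSphere D' (fun q => ω q * (b q : ℝ)) (‖v‖ • (‖v‖⁻¹ • v)) := by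
        rw [persSphere_smul _ _ _ (norm_nonneg v), persSphere_smul _ _ _ (norm_nonneg v), h1]
      rwa [smul_smul, mul_inv_cancel₀ hn, one_smul] at h2
  -- combined signed sum vanishes
  have hsum : ∀ v : EuclideanSpace ℝ (Fin 3),
      ∑ p ∈ D ∪ D', F p * max 0 (inner ℝ v (lift3 p) : ℝ) = 0 := by
    intro v
    have e1 : ∑ p ∈ D ∪ D', (if p ∈ D then ω p * (a p : ℝ) else 0) * max 0 (inner ℝ v (lift3 p) : ℝ)
        = persSphere D (fun p => ω p * (a p : ℝ)) v := by
      simp only [ite_mul, zero_mul]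
      rw [Finset.sum_ite_mem, Finset.inter_eq_right.mpr Finset.subset_union_left]
      rfl
    have e2 : ∑ p ∈ D ∪ D', (if p ∈ D' then ω p * (b p : ℝ) else 0) * max 0 (inner ℝ v (lift3 p) : ℝ)
        = persSphere D' (fun q => ω q * (b q : ℝ)) v := by
      simp only [ite_mul, zero_mul]
      rw [Finset.sum_ite_mem, Finset.inter_eq_right.mpr Finset.subset_union_right]
      rfl
    simp only [hFdef, sub_mul]
    rw [Finset.sum_sub_distrib, e1, e2, hall v, sub_self]
  -- absolute-value version
  have habs : ∀ v : EuclideanSpace ℝ (Fin 3),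
      ∑ p ∈ D ∪ D', F p * |(inner ℝ v (lift3 p) : ℝ)| = 0 := by
    intro v
    have h1 := hsum v
    have h2 := hsum (-v)
    have e : ∑ p ∈ D ∪ D', F p * |(inner ℝ v (lift3 p) : ℝ)|
        = (∑ p ∈ D ∪ D', F p * max 0 (inner ℝ v (lift3 p) : ℝ))
          + (∑ p ∈ D ∪ D', F p * max 0 (inner ℝ (-v) (lift3 p) : ℝ)) := by
      rw [← Finset.sum_add_distrib]
      refine Finset.sum_congr rfl fun p _ => ?_
      rw [← mul_add, inner_neg_left, max_zero_add_max_zero_neg]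
    rw [e, h1, h2, add_zero]
  have hF0 : ∀ p ∈ D ∪ D', F p = 0 := fun p hp => coeff_vanish _ F habs p hp
  have hDsub : D ⊆ D' := by
    intro p hp
    by_contra hp'
    have h0 := hF0 p (Finset.mem_union_left _ hp)
    rw [hFdef] at h0
    simp only [if_pos hp, if_neg hp', sub_zero] at h0
    have := mul_pos (hωpos p) (Nat.cast_pos.mpr (ha p hp) : (0:ℝ) < a p)
    linarith
  have hD'sub : D' ⊆ D := by
    intro p hp
    by_contra hp'
    have h0 := hF0 p (Finset.mem_union_right _ hp)
    rw [hFdef] at h0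
    simp only [if_pos hp, if_neg hp', zero_sub, neg_eq_zero] at h0
    have := mul_pos (hωpos p) (Nat.cast_pos.mpr (hb p hp) : (0:ℝ) < b p)
    linarith
  refine ⟨Finset.Subset.antisymm hDsub hD'sub, fun p hp => ?_⟩
  have hp' : p ∈ D' := hDsub hp
  have h0 := hF0 p (Finset.mem_union_left _ hp)
  rw [hFdef] at h0
  simp only [if_pos hp, if_pos hp'] at h0
  have hcast : (a p : ℝ) = (b p : ℝ) :=
    mul_left_cancel₀ (hωpos p).ne' (sub_eq_zero.mp h0)
  exact_mod_cast hcast
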